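/- Let Y be a real vector space, A ⊆ Y and k ∈ Y \ {0}. Define Ã := sublev_{φ_{A,k}}(0). Then Ã is k-directionally closed, k ∈ −0⁺Ã \ {0}, and φ_{A,k}(y) = φ_{Ã,k}(y) for all y ∈ Y. -/

import Mathlib

/-- The `k`-directional closure of a set `A`. -/
def dirCl {Y : Type*} [AddCommGroup Y] [Module ℝ Y] (A : Set Y) (k : Y) : Set Y :=
  {y | ∀ l : ℝ, 0 < l → ∃ t : ℝ, 0 ≤ t ∧ t < l ∧ y - t • k ∈ A}

/-- The recession cone `0⁺A` of a set `A`. -/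
def recCone {Y : Type*} [AddCommGroup Y] [Module ℝ Y] (A : Set Y) : Set Y :=
  {u | ∀ a ∈ A, ∀ t : ℝ, 0 ≤ t → a + t • u ∈ A}

/-- The Gerstewitz functional `φ_{A,k}`. -/
noncomputable def gerst {Y : Type*} [AddCommGroup Y] [Module ℝ Y]
    (A : Set Y) (k : Y) (y : Y) : EReal :=
  sInf (Real.toEReal '' {t : ℝ | y - t • k ∈ A})

/-- Subtracting a real constant as an order isomorphism of `EReal`. -/
noncomputable def subRealIso (s : ℝ) : EReal ≃o EReal where
  toFun x := x - (s : EReal)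
  invFun x := x + (s : EReal)
  left_inv x := EReal.sub_add_cancel
  right_inv x := EReal.add_sub_cancel_right
  map_rel_iff' {a b} := by
    simp only [Equiv.coe_fn_mk, sub_eq_add_neg, ← EReal.coe_neg]
    exact (EReal.addLECancellable_coe (-s)).add_le_add_iff_right

lemma gerst_sub_smul {Y : Type*} [AddCommGroup Y] [Module ℝ Y]
    (A : Set Y) (k : Y) (y : Y) (s : ℝ) :
    gerst A k (y - s • k) = gerst A k y - (s : EReal) := by
  have hset : Real.toEReal '' {t : ℝ | y - s • k - t • k ∈ A}
      = (subRealIso s) '' (Real.toEReal '' {t : ℝ | y - t • k ∈ A}) := by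
    ext x
    simp only [Set.mem_image, Set.mem_setOf_eq]
    constructor
    · rintro ⟨t, ht, rfl⟩
      have hmem : y - (t + s) • k ∈ A := by
        have h3 : y - (t + s) • k = y - s • k - t • k := by rw [add_smul]; abel
        rw [h3]; exact ht
      refine ⟨((t + s : ℝ) : EReal), ⟨t + s, hmem, rfl⟩, ?_⟩
      show ((t + s : ℝ) : EReal) - (s : EReal) = (t : EReal)
      rw [EReal.coe_add, EReal.add_sub_cancel_right]
    · rintro ⟨x', ⟨t, ht, rfl⟩, rfl⟩
      have hmem : y - s • k - (t - s) • k ∈ A := by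
        have h3 : y - s • k - (t - s) • k = y - t • k := by rw [sub_smul]; abel
        rw [h3]; exact ht
      refine ⟨t - s, hmem, ?_⟩
      show ((t - s : ℝ) : EReal) = (t : EReal) - (s : EReal)
      rw [EReal.coe_sub]
  show sInf (Real.toEReal '' {t : ℝ | y - s • k - t • k ∈ A})
      = subRealIso s (sInf (Real.toEReal '' {t : ℝ | y - t • k ∈ A}))
  rw [hset, OrderIso.map_sInf, sInf_image]

lemma sInf_le_set_eq (x : EReal) : sInf (Real.toEReal '' {t : ℝ | x ≤ (t : EReal)}) = x := by
  apply le_antisymm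
  · rw [← EReal.le_of_forall_lt_iff_le]
    intro z hz
    exact sInf_le ⟨z, hz.le, rfl⟩
  · exact le_sInf (by rintro _ ⟨t, ht, rfl⟩; exact ht)

theorem zero_sublevel_gerst {Y : Type*} [AddCommGroup Y] [Module ℝ Y]
    (A : Set Y) (k : Y) (hk : k ≠ 0) :
    {y : Y | gerst A k y ≤ (0 : EReal)} = dirCl {y : Y | gerst A k y ≤ (0 : EReal)} k ∧
    -k ∈ recCone {y : Y | gerst A k y ≤ (0 : EReal)} ∧
    (∀ y : Y, gerst A k y = gerst {y' : Y | gerst A k y' ≤ (0 : EReal)} k y) := by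
  have key : ∀ (y : Y) (t : ℝ), gerst A k (y - t • k) ≤ 0 ↔ gerst A k y ≤ (t : EReal) := by
    intro y t
    rw [gerst_sub_smul]
    rw [EReal.sub_le_iff_le_add (by simp) (by simp), zero_add]
  refine ⟨?_, ?_, ?_⟩
  · apply le_antisymm
    · intro y hy l hl
      exact ⟨0, le_refl 0, hl, by simpa using hy⟩
    · intro y hy
      simp only [Set.mem_setOf_eq]
      rw [← EReal.le_of_forall_lt_iff_le]
      intro z hz
      obtain ⟨t, ht0, htz, hmem⟩ := hy z (by exact_mod_cast hz)
      exact ((key y t).1 hmem).trans (by exact_mod_cast htz.le)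
  · intro a ha t ht
    have : a + t • (-k) = a - t • k := by rw [smul_neg]; abel
    rw [Set.mem_setOf_eq, this, key]
    exact ha.trans (by exact_mod_cast ht)
  · intro y
    have h2 : {t : ℝ | y - t • k ∈ {y' : Y | gerst A k y' ≤ (0 : EReal)}}
        = {t : ℝ | gerst A k y ≤ (t : EReal)} := by
      ext t; exact key y t
    calc gerst A k y = sInf (Real.toEReal '' {t : ℝ | gerst A k y ≤ (t : EReal)}) :=
          (sInf_le_set_eq _).symm
      _ = gerst {y' : Y | gerst A k y' ≤ (0 : EReal)} k y := by rw [← h2]; rfl
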